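/- Let n ≥ 1 and let C ⊆ 𝔽₃ⁿ be a greedy capset. Then the cardinality of C equals 2ⁿ. -/

import Mathlib

/-- A line in `𝔽₃ⁿ`: a coset of a one-dimensional linear subspace. -/
def IsLine {n : ℕ} (L : Set (Fin n → ZMod 3)) : Prop :=
  ∃ p v : Fin n → ZMod 3, v ≠ 0 ∧ L = {x | ∃ t : ZMod 3, x = p + t • v}

/-- A capset: a subset of `𝔽₃ⁿ` containing no line. -/
def IsCapset {n : ℕ} (C : Set (Fin n → ZMod 3)) : Prop :=
  ∀ L : Set (Fin n → ZMod 3), IsLine L → ¬ L ⊆ C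

/-- `lineDeg S P`: the number of lines through `P` that are contained in `S`. -/
noncomputable def lineDeg {n : ℕ} (S : Set (Fin n → ZMod 3)) (P : Fin n → ZMod 3) : ℕ :=
  Set.ncard {L : Set (Fin n → ZMod 3) | IsLine L ∧ P ∈ L ∧ L ⊆ S}

/-- The sequence of sets in a greedy construction removing the points `P 0, P 1, …`. -/
def greedySeq {n : ℕ} (P : ℕ → (Fin n → ZMod 3)) : ℕ → Set (Fin n → ZMod 3)
  | 0 => Set.univ
  | (i+1) => greedySeq P i \ {P i}

/-- A greedy capset: a capset obtained from `𝔽₃ⁿ` by successively removing a point whose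
number of lines through it contained in the remaining set is positive and maximal,
until the remaining set is a capset. -/
def IsGreedyCapset {n : ℕ} (C : Set (Fin n → ZMod 3)) : Prop :=
  ∃ (k : ℕ) (P : ℕ → (Fin n → ZMod 3)),
    (∀ i < k, P i ∈ greedySeq P i ∧ 0 < lineDeg (greedySeq P i) (P i) ∧
      ∀ Q ∈ greedySeq P i, lineDeg (greedySeq P i) Q ≤ lineDeg (greedySeq P i) (P i)) ∧
    C = greedySeq P k ∧ IsCapset C

/-- An affine hyperplane in `𝔽₃ⁿ`: the solution set of one nontrivial linear equation. -/
def IsHyperplane {n : ℕ} (H : Set (Fin n → ZMod 3)) : Prop :=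
  ∃ (a : Fin n → ZMod 3) (b : ZMod 3), a ≠ 0 ∧ H = {x | ∑ i, a i * x i = b}

/-- `H₀, H₁, H₂` form a triple of parallel affine hyperplanes partitioning `𝔽₃ⁿ`
(`H₁` and `H₂` are the two hyperplanes parallel to `H₀`). -/
def ParallelTriple {n : ℕ} (H₀ H₁ H₂ : Set (Fin n → ZMod 3)) : Prop :=
  ∃ (a : Fin n → ZMod 3) (b : ZMod 3), a ≠ 0 ∧
    H₀ = {x | ∑ i, a i * x i = b} ∧
    H₁ = {x | ∑ i, a i * x i = b + 1} ∧
    H₂ = {x | ∑ i, a i * x i = b + 2}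

namespace Aux
variable {n : ℕ}
abbrev V (n : ℕ) := Fin n → ZMod 3

lemma id_smul2 (v : V n) : (2 : ZMod 3) • v = -v := by
  funext i; have : ∀ a : ZMod 3, (2 : ZMod 3) * a = -a := by decide
  exact this _

lemma id_third_right (X v : V n) : -X - (X + v) = X - v := by
  funext i; have : ∀ a b : ZMod 3, -a - (a + b) = a - b := by decide
  exact this (X i) (v i)

lemma id_add_sub (X Q : V n) : X + (Q - X) = Q := by funext i; simp only [Pi.add_apply, Pi.sub_apply]; ring

lemma id_sub_sub (X Q : V n) : X - (Q - X) = -X - Q := by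
  funext i; have : ∀ a b : ZMod 3, a - (b - a) = -a - b := by decide
  exact this (X i) (Q i)

lemma id_shift (p v : V n) : p + v + v = p - v := by
  funext i; have : ∀ a b : ZMod 3, a + b + b = a - b := by decide
  exact this (p i) (v i)

lemma setOf_line (p v : V n) :
    {x : V n | ∃ t : ZMod 3, x = p + t • v} = {p, p + v, p - v} := by
  ext x
  simp only [Set.mem_setOf_eq, Set.mem_insert_iff, Set.mem_singleton_iff]
  constructor
  · rintro ⟨t, rfl⟩
    have hcases : t = 0 ∨ t = 1 ∨ t = 2 := by revert t; decide
    rcases hcases with rfl | rfl | rfl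
    · left; rw [zero_smul, add_zero]
    · right; left; rw [one_smul]
    · right; right; rw [id_smul2, sub_eq_add_neg]
  · rintro (rfl | rfl | rfl)
    · exact ⟨0, by rw [zero_smul, add_zero]⟩
    · exact ⟨1, by rw [one_smul]⟩
    · exact ⟨2, by rw [id_smul2, sub_eq_add_neg]⟩

lemma isLine_through_iff (L : Set (V n)) (X : V n) :
    (IsLine L ∧ X ∈ L) ↔ ∃ Q, Q ≠ X ∧ L = {X, Q, -X - Q} := by
  constructor
  · rintro ⟨⟨p, v, hv, rfl⟩, hX⟩
    rw [setOf_line] at *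
    have hQform : {p, p + v, p - v} = ({X, X + v, -X - (X+v)} : Set (V n)) := by
      rw [id_third_right]
      rcases hX with rfl | rfl | rfl
      · rfl
      · -- X = p + v : X + v = p - v, X - v = p
        have h1 : p + v + v = p - v := id_shift p v
        have h2 : p + v - v = p := by funext i; simp only [Pi.add_apply, Pi.sub_apply]; ring
        rw [h1, h2]
        ext y; simp only [Set.mem_insert_iff, Set.mem_singleton_iff]; tauto
      · -- X = p - v : X + v = p, X - v = p - v - v = p + v
        have h1 : p - v + v = p := by funext i; simp only [Pi.add_apply, Pi.sub_apply]; ring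
        have h2 : p - v - v = p + v := by
          funext i; have : ∀ a b : ZMod 3, a - b - b = a + b := by decide
          exact this (p i) (v i)
        rw [h1, h2]
        ext y; simp only [Set.mem_insert_iff, Set.mem_singleton_iff]; tauto
    refine ⟨X + v, ?_, hQform⟩
    intro h
    exact hv (by have := congrArg (fun y => y - X) h; simpa using this)
  · rintro ⟨Q, hQX, rfl⟩
    have hv : Q - X ≠ 0 := fun h => hQX (by have := congrArg (fun y => y + X) h; simpa using this)
    refine ⟨⟨X, Q - X, hv, ?_⟩, Set.mem_insert _ _⟩
    rw [setOf_line, id_add_sub, id_sub_sub]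


lemma neg_neg_self (X : V n) : -X - X = X := by
  funext i; have : ∀ a : ZMod 3, -a - a = a := by decide
  exact this _

lemma id_invol (X Q : V n) : -X - (-X - Q) = Q := by
  funext i; have : ∀ a b : ZMod 3, -a - (-a - b) = b := by decide
  exact this (X i) (Q i)

lemma third_ne (X Q : V n) (h : Q ≠ X) : -X - Q ≠ X := by
  intro hc; apply h
  have := congrArg (fun y => -X - y) hc
  simpa [id_invol, neg_neg_self] using this

lemma third_ne_self (X Q : V n) (h : Q ≠ X) : -X - Q ≠ Q := by
  intro hc
  apply h
  have h2 := congrArg (fun y => -X - y) hc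
  simp only [id_invol] at h2
  -- h2 : Q = -X - Q; combined with hc : -X - Q = Q gives ... need Q = X
  -- from hc: -X - Q = Q ⇒ -X = Q + Q ⇒ X = -(2Q)=Q
  have : ∀ a b : ZMod 3, -a - b = b → b = a := by decide
  exact funext fun i => this (X i) (Q i) (congrFun hc i)


def Tset (S : Set (V n)) (X : V n) : Set (V n) := {Q | Q ≠ X ∧ Q ∈ S ∧ -X - Q ∈ S}

lemma triple_eq_of_mem {X Q W : V n} (hW : W = Q ∨ W = -X - Q) :
    ({X, Q, -X - Q} : Set (V n)) = {X, W, -X - W} := by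
  rcases hW with rfl | rfl
  · rfl
  · rw [id_invol]
    ext y; simp only [Set.mem_insert_iff, Set.mem_singleton_iff]; tauto

lemma two_mul_lineDeg (S : Set (V n)) (X : V n) (hX : X ∈ S) :
    2 * lineDeg S X = (Tset S X).ncard := by
  classical
  set Lines : Set (Set (V n)) := {L | IsLine L ∧ X ∈ L ∧ L ⊆ S} with hLines
  have hmem : ∀ L, L ∈ Lines ↔ ∃ Q, Q ≠ X ∧ L = {X, Q, -X - Q} ∧ Q ∈ S ∧ -X - Q ∈ S := by
    intro L
    constructor
    · rintro ⟨h1, h2, h3⟩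
      obtain ⟨Q, hQ, rfl⟩ := (isLine_through_iff L X).mp ⟨h1, h2⟩
      exact ⟨Q, hQ, rfl, h3 (by simp), h3 (by simp)⟩
    · rintro ⟨Q, hQ, rfl, hQS, hQS'⟩
      obtain ⟨h1, h2⟩ := (isLine_through_iff _ X).mpr ⟨Q, hQ, rfl⟩
      refine ⟨h1, h2, ?_⟩
      intro y hy
      rcases hy with rfl | rfl | rfl
      · exact hX
      · exact hQS
      · exact hQS'
  have hcup : Tset S X = ⋃ L ∈ Lines, (L \ {X}) := by
    ext W
    simp only [Set.mem_iUnion, exists_prop]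
    constructor
    · rintro ⟨hWX, hWS, hWS'⟩
      refine ⟨{X, W, -X - W}, (hmem _).mpr ⟨W, hWX, rfl, hWS, hWS'⟩, ?_, hWX⟩
      simp
    · rintro ⟨L, hL, hWL, hWX⟩
      obtain ⟨Q, hQ, rfl, hQS, hQS'⟩ := (hmem L).mp hL
      rcases hWL with rfl | rfl | rfl
      · exact absurd rfl hWX
      · exact ⟨hQ, hQS, hQS'⟩
      · exact ⟨third_ne X Q hQ, hQS', by rw [id_invol]; exact hQS⟩
  have hLfin : Lines.Finite := Set.toFinite _
  have hTfin : (Tset S X).Finite := Set.toFinite _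
  -- convert to finsets
  have hcard : (Tset S X).ncard = ∑ L ∈ hLfin.toFinset, (Set.toFinite (L \ {X})).toFinset.card := by
    rw [Set.ncard_eq_toFinset_card _ hTfin]
    have : hTfin.toFinset = hLfin.toFinset.biUnion (fun L => (Set.toFinite (L \ {X})).toFinset) := by
      ext W
      simp only [Set.Finite.mem_toFinset, Finset.mem_biUnion, hcup, Set.mem_iUnion, exists_prop]
    rw [this]
    apply Finset.card_biUnion
    intro L hL L' hL' hne
    rw [Finset.mem_coe, Set.Finite.mem_toFinset] at hL hL'
    obtain ⟨Q, hQ, rfl, _, _⟩ := (hmem L).mp hL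
    obtain ⟨Q', hQ', rfl, _, _⟩ := (hmem L').mp hL'
    rw [Function.onFun, Finset.disjoint_left]
    intro W hW hW'
    rw [Set.Finite.mem_toFinset, Set.mem_diff, Set.mem_singleton_iff] at hW hW'
    apply hne
    have e1 : ({X, Q, -X - Q} : Set (V n)) = {X, W, -X - W} := by
      apply triple_eq_of_mem
      rcases hW.1 with rfl | h | h
      · exact absurd rfl hW.2
      · exact Or.inl h
      · exact Or.inr h
    have e2 : ({X, Q', -X - Q'} : Set (V n)) = {X, W, -X - W} := by
      apply triple_eq_of_mem
      rcases hW'.1 with rfl | h | h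
      · exact absurd rfl hW'.2
      · exact Or.inl h
      · exact Or.inr h
    rw [e1, e2]
  have hsum : ∀ L ∈ hLfin.toFinset, (Set.toFinite (L \ {X})).toFinset.card = 2 := by
    intro L hL
    rw [Set.Finite.mem_toFinset] at hL
    obtain ⟨Q, hQ, rfl, _, _⟩ := (hmem L).mp hL
    have : ({X, Q, -X - Q} : Set (V n)) \ {X} = {Q, -X - Q} := by
      ext y
      simp only [Set.mem_diff, Set.mem_insert_iff, Set.mem_singleton_iff]
      constructor
      · rintro ⟨h1 | h1 | h1, h2⟩
        · exact absurd h1 h2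
        · exact Or.inl h1
        · exact Or.inr h1
      · rintro (rfl | rfl)
        · exact ⟨Or.inr (Or.inl rfl), hQ⟩
        · exact ⟨Or.inr (Or.inr rfl), third_ne X Q hQ⟩
    rw [← Set.ncard_eq_toFinset_card _ _, this]
    exact Set.ncard_pair (Ne.symm (third_ne_self X Q hQ))
  rw [hcard, Finset.sum_congr rfl hsum, Finset.sum_const, smul_eq_mul,
    lineDeg, Set.ncard_eq_toFinset_card _ hLfin, Nat.mul_comm]


/-- third-point closed set (= affine subspace or ∅) -/
def TC (B : Set (V n)) : Prop := ∀ p ∈ B, ∀ q ∈ B, -p - q ∈ B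

/-- the "pair degree" of X w.r.t. removed set R -/
noncomputable def gdeg (R : Set (V n)) (X : V n) : ℕ :=
  (R ∩ (fun q => -X - q) '' R).ncard

lemma sigma_inj (X : V n) : Function.Injective (fun q : V n => -X - q) := by
  intro a b h
  have := congrArg (fun y => -X - y) h
  simpa [id_invol] using this

lemma mem_sigma_image {X : V n} {R : Set (V n)} {Q : V n} :
    Q ∈ (fun q => -X - q) '' R ↔ -X - Q ∈ R := by
  constructor
  · rintro ⟨r, hr, rfl⟩; rwa [id_invol]
  · intro h; exact ⟨-X - Q, h, id_invol X Q⟩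

lemma deg_formula {B R : Set (V n)} (hB : TC B) (hRB : R ⊆ B) {X : V n}
    (hXB : X ∈ B) (hXR : X ∉ R) :
    2 * lineDeg (B \ R) X + 2 * R.ncard + 1 = B.ncard + gdeg R X := by
  have hXS : X ∈ B \ R := ⟨hXB, hXR⟩
  rw [two_mul_lineDeg _ _ hXS]
  have hT : Tset (B \ R) X = (B \ {X}) \ (R ∪ (fun q => -X - q) '' R) := by
    ext Q
    simp only [Tset, Set.mem_setOf_eq, Set.mem_diff, Set.mem_singleton_iff, Set.mem_union,
      mem_sigma_image]
    constructor
    · rintro ⟨h1, ⟨h2, h3⟩, ⟨h4, h5⟩⟩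
      exact ⟨⟨h2, h1⟩, fun h => h.elim h3 h5⟩
    · rintro ⟨⟨h1, h2⟩, h3⟩
      push_neg at h3
      exact ⟨h2, ⟨h1, h3.1⟩, ⟨hB _ hXB _ h1, h3.2⟩⟩
  have hsub : R ∪ (fun q : V n => -X - q) '' R ⊆ B \ {X} := by
    rintro q (hq | hq)
    · refine ⟨hRB hq, fun h => ?_⟩
      rw [Set.mem_singleton_iff] at h
      subst h
      exact hXR hq
    · rw [mem_sigma_image] at hq
      refine ⟨?_, ?_⟩
      · -- q ∈ B since -X - (σ q) ... q = -X - (-X - q)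
        have : q = -X - (-X - q) := (id_invol X q).symm
        rw [this]; exact hB _ hXB _ (hRB hq)
      · intro h
        rw [Set.mem_singleton_iff] at h
        subst h
        rw [neg_neg_self] at hq
        exact hXR hq
  have e1 : (Tset (B \ R) X).ncard + (R ∪ (fun q : V n => -X - q) '' R).ncard = (B \ {X}).ncard := by
    rw [hT]; exact Set.ncard_diff_add_ncard_of_subset hsub (Set.toFinite _)
  have e2 : (B \ {X}).ncard + 1 = B.ncard := by
    rw [Set.ncard_diff_singleton_of_mem hXB]
    have : 0 < B.ncard := (Set.ncard_pos (Set.toFinite _)).mpr ⟨X, hXB⟩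
    omega
  have e3 : (R ∪ (fun q : V n => -X - q) '' R).ncard + gdeg R X = 2 * R.ncard := by
    have := Set.ncard_union_add_ncard_inter R ((fun q : V n => -X - q) '' R) (Set.toFinite _) (Set.toFinite _)
    rw [Set.ncard_image_of_injective _ (sigma_inj X)] at this
    unfold gdeg
    omega
  omega

lemma gdeg_eq_zero {A' R : Set (V n)} (hA' : TC A') (hRA' : R ⊆ A') {X : V n}
    (hX : X ∉ A') : gdeg R X = 0 := by
  unfold gdeg
  rw [Set.ncard_eq_zero (Set.toFinite _)]
  ext q
  simp only [Set.mem_inter_iff, mem_sigma_image, Set.mem_empty_iff_false, iff_false]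
  rintro ⟨h1, h2⟩
  apply hX
  have hid : X = -q - (-X - q) := by
    funext i; have : ∀ a b : ZMod 3, a = -b - (-a - b) := by decide
    exact this (X i) (q i)
  rw [hid]
  exact hA' _ (hRA' h1) _ (hRA' h2)

lemma gdeg_pos {R : Set (V n)} {q q' : V n} (hq : q ∈ R) (hq' : q' ∈ R) :
    1 ≤ gdeg R (-q - q') := by
  rw [Nat.one_le_iff_ne_zero, ← Nat.pos_iff_ne_zero, gdeg, Set.ncard_pos (Set.toFinite _)]
  refine ⟨q, hq, ?_⟩
  rw [mem_sigma_image]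
  have : -(-q - q') - q = q' := by
    funext i; have : ∀ a b : ZMod 3, -(-a - b) - a = b := by decide
    exact this (q i) (q' i)
  rwa [this]


/-- second coset of the span of A ∪ {x} -/
def cosB (A : Set (V n)) (x : V n) : Set (V n) := {y | ∃ a ∈ A, ∃ a' ∈ A, y = x + a - a'}
/-- third coset -/
def cosC (A : Set (V n)) (x : V n) : Set (V n) := (fun a => -x - a) '' A
def tripleSpan (A : Set (V n)) (x : V n) : Set (V n) := A ∪ cosB A x ∪ cosC A x

lemma subset_tripleSpan (A : Set (V n)) (x : V n) : A ⊆ tripleSpan A x :=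
  fun _ h => Or.inl (Or.inl h)

lemma mem_tripleSpan_self {A : Set (V n)} (hA : A.Nonempty) (x : V n) :
    x ∈ tripleSpan A x := by
  obtain ⟨a, ha⟩ := hA
  exact Or.inl (Or.inr ⟨a, ha, a, ha, by funext i; simp only [Pi.add_apply, Pi.sub_apply]; ring⟩)

lemma third_comm (p q : V n) : -p - q = -q - p := by
  funext i; simp only [Pi.sub_apply, Pi.neg_apply]; ring

lemma tc_tripleSpan {A : Set (V n)} (hA : TC A) (x : V n) : TC (tripleSpan A x) := by
  have key : ∀ p ∈ tripleSpan A x, ∀ q ∈ tripleSpan A x,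
      (p ∈ A → -p - q ∈ tripleSpan A x) := by
    rintro p hp q hq hpA
    rcases hq with (hqA | ⟨b, hb, b', hb', rfl⟩) | ⟨b, hb, rfl⟩
    · exact Or.inl (Or.inl (hA _ hpA _ hqA))
    · -- -p - (x + b - b') ∈ cosC : = -x - (-(-p-b) - b')
      refine Or.inr ⟨-(-p - b) - b', hA _ (hA _ hpA _ hb) _ hb', ?_⟩
      funext i; simp only [Pi.sub_apply, Pi.neg_apply, Pi.add_apply]; ring
    · -- -p - (-x - b) = x + b - p ∈ cosB
      refine Or.inl (Or.inr ⟨b, hb, p, hpA, ?_⟩)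
      funext i; simp only [Pi.sub_apply, Pi.neg_apply, Pi.add_apply]; ring
  rintro p hp q hq
  rcases hp with (hpA | ⟨a, ha, a', ha', rfl⟩) | ⟨a, ha, rfl⟩
  · exact key p (Or.inl (Or.inl hpA)) q hq hpA
  · -- p ∈ cosB
    rcases hq with (hqA | ⟨b, hb, b', hb', rfl⟩) | ⟨b, hb, rfl⟩
    · rw [third_comm]
      exact key q (Or.inl (Or.inl hqA)) _ (Or.inl (Or.inr ⟨a, ha, a', ha', rfl⟩)) hqA
    · -- cosB cosB → cosB : x + (-a-b) - (-a'-b')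
      refine Or.inl (Or.inr ⟨-a - b, hA _ ha _ hb, -a' - b', hA _ ha' _ hb', ?_⟩)
      funext i; simp only [Pi.sub_apply, Pi.neg_apply, Pi.add_apply]
      have : ∀ x a a' b b' : ZMod 3, -(x + a - a') - (x + b - b') = x + (-a - b) - (-a' - b') := by decide
      exact this _ _ _ _ _
    · -- cosB cosC → A : -(-a'-b) - a
      have : -(x + a - a') - (-x - b) = -(-a' - b) - a := by
        funext i; simp only [Pi.sub_apply, Pi.neg_apply, Pi.add_apply]; ring
      rw [this]
      exact Or.inl (Or.inl (hA _ (hA _ ha' _ hb) _ ha))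
  · -- p ∈ cosC
    rcases hq with (hqA | ⟨b, hb, b', hb', rfl⟩) | ⟨b, hb, rfl⟩
    · rw [third_comm]
      exact key q (Or.inl (Or.inl hqA)) _ (Or.inr ⟨a, ha, rfl⟩) hqA
    · rw [third_comm]
      have : -(x + b - b') - (-x - a) = -(-b' - a) - b := by
        funext i; simp only [Pi.sub_apply, Pi.neg_apply, Pi.add_apply]; ring
      rw [this]
      exact Or.inl (Or.inl (hA _ (hA _ hb' _ ha) _ hb))
    · -- cosC cosC → cosC : -x - (-a-b)
      refine Or.inr ⟨-a - b, hA _ ha _ hb, ?_⟩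
      funext i; simp only [Pi.sub_apply, Pi.neg_apply, Pi.add_apply]
      have : ∀ x a b : ZMod 3, -x - (-a - b) = -(-x - a) - (-x - b) := by decide
      exact this _ _ _

lemma tripleSpan_subset {A R : Set (V n)} {x : V n} (hR : TC R) (hAR : A ⊆ R)
    (hxR : x ∈ R) : tripleSpan A x ⊆ R := by
  rintro y ((hyA | ⟨a, ha, a', ha', rfl⟩) | ⟨a, ha, rfl⟩)
  · exact hAR hyA
  · have : x + a - a' = -(-x - a) - a' := by
      funext i; simp only [Pi.sub_apply, Pi.neg_apply, Pi.add_apply]; ring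
    rw [this]
    exact hR _ (hR _ hxR _ (hAR ha)) _ (hAR ha')
  · exact hR _ hxR _ (hAR ha)

lemma cosB_eq_image {A : Set (V n)} (hA : TC A) {a₀ : V n} (ha₀ : a₀ ∈ A) (x : V n) :
    cosB A x = (fun a => x + a - a₀) '' A := by
  ext y
  constructor
  · rintro ⟨a, ha, a', ha', rfl⟩
    refine ⟨-(-a - a₀) - a', hA _ (hA _ ha _ ha₀) _ ha', ?_⟩
    funext i; simp only [Pi.sub_apply, Pi.neg_apply, Pi.add_apply]; ring
  · rintro ⟨a, ha, rfl⟩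
    exact ⟨a, ha, a₀, ha₀, rfl⟩

lemma disj_ABC {A : Set (V n)} (hA : TC A) {x : V n} (hx : x ∉ A) :
    (A ∩ cosB A x = ∅) ∧ (A ∩ cosC A x = ∅) ∧ (cosB A x ∩ cosC A x = ∅) := by
  refine ⟨?_, ?_, ?_⟩
  · ext y
    simp only [Set.mem_inter_iff, Set.mem_empty_iff_false, iff_false]
    rintro ⟨hyA, a, ha, a', ha', hy⟩
    apply hx
    have : x = -(-y - a') - a := by
      have := congrFun hy
      funext i
      have h := this i
      simp only [Pi.add_apply, Pi.sub_apply, Pi.neg_apply] at h ⊢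
      linear_combination -h
    rw [this]
    exact hA _ (hA _ hyA _ ha') _ ha
  · ext y
    simp only [Set.mem_inter_iff, Set.mem_empty_iff_false, iff_false]
    rintro ⟨hyA, a, ha, hy⟩
    apply hx
    have : x = -y - a := by
      funext i
      have h := congrFun hy i
      simp only [Pi.sub_apply, Pi.neg_apply] at h ⊢
      linear_combination -h
    rw [this]
    exact hA _ hyA _ ha
  · ext y
    simp only [Set.mem_inter_iff, Set.mem_empty_iff_false, iff_false]
    rintro ⟨⟨a, ha, a', ha', hy⟩, b, hb, hy'⟩
    apply hx
    -- x + a - a' = -x - b  ⇒  x = -(-a-b) - a'  (char 3)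
    have : x = -(-a - b) - a' := by
      funext i
      have h := congrFun (hy.symm.trans hy'.symm) i
      simp only [Pi.add_apply, Pi.sub_apply, Pi.neg_apply] at h ⊢
      have : ∀ x a a' b : ZMod 3, x + a - a' = -x - b → x = -(-a - b) - a' := by decide
      exact this _ _ _ _ h
    rw [this]
    exact hA _ (hA _ ha _ hb) _ ha'

lemma ncard_tripleSpan {A : Set (V n)} (hA : TC A) (hAne : A.Nonempty) {x : V n}
    (hx : x ∉ A) : (tripleSpan A x).ncard = 3 * A.ncard := by
  obtain ⟨hd1, hd2, hd3⟩ := disj_ABC hA hx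
  obtain ⟨a₀, ha₀⟩ := hAne
  have hB : (cosB A x).ncard = A.ncard := by
    rw [cosB_eq_image hA ha₀]
    apply Set.ncard_image_of_injective
    intro u v h
    have := congrArg (fun y => y - x + a₀) h
    funext i
    have h2 := congrFun this i
    simp only [Pi.add_apply, Pi.sub_apply] at h2
    linear_combination h2
  have hC : (cosC A x).ncard = A.ncard := by
    apply Set.ncard_image_of_injective
    intro u v h
    funext i
    have h2 := congrFun h i
    simp only [Pi.sub_apply, Pi.neg_apply] at h2
    linear_combination -h2
  have d12 : Disjoint A (cosB A x) := Set.disjoint_iff_inter_eq_empty.mpr hd1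
  have d3 : Disjoint (A ∪ cosB A x) (cosC A x) := by
    rw [Set.disjoint_union_left]
    exact ⟨Set.disjoint_iff_inter_eq_empty.mpr hd2, Set.disjoint_iff_inter_eq_empty.mpr hd3⟩
  rw [tripleSpan, Set.ncard_union_eq d3 (Set.toFinite _) (Set.toFinite _),
    Set.ncard_union_eq d12 (Set.toFinite _) (Set.toFinite _), hB, hC]
  ring


/-- standalone: second coset is third-closed -/
lemma tc_cosB {A : Set (V n)} (hA : TC A) (x : V n) :
    ∀ p ∈ cosB A x, ∀ q ∈ cosB A x, -p - q ∈ cosB A x := by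
  rintro p ⟨a, ha, a', ha', rfl⟩ q ⟨b, hb, b', hb', rfl⟩
  refine ⟨-a - b, hA _ ha _ hb, -a' - b', hA _ ha' _ hb', ?_⟩
  funext i; simp only [Pi.sub_apply, Pi.neg_apply, Pi.add_apply]
  have : ∀ x a a' b b' : ZMod 3, -(x + a - a') - (x + b - b') = x + (-a - b) - (-a' - b') := by
    decide
  exact this _ _ _ _ _

lemma tc_cosC {A : Set (V n)} (hA : TC A) (x : V n) :
    ∀ p ∈ cosC A x, ∀ q ∈ cosC A x, -p - q ∈ cosC A x := by
  rintro p ⟨a, ha, rfl⟩ q ⟨b, hb, rfl⟩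
  refine ⟨-a - b, hA _ ha _ hb, ?_⟩
  funext i; simp only [Pi.sub_apply, Pi.neg_apply, Pi.add_apply]
  have : ∀ x a b : ZMod 3, -x - (-a - b) = -(-x - a) - (-x - b) := by decide
  exact this _ _ _

lemma cross_third_mem_A {A : Set (V n)} (hA : TC A) (x : V n) :
    ∀ p ∈ cosB A x, ∀ q ∈ cosC A x, -p - q ∈ A := by
  rintro p ⟨a, ha, a', ha', rfl⟩ q ⟨b, hb, rfl⟩
  have : -(x + a - a') - (-x - b) = -(-a' - b) - a := by
    funext i; simp only [Pi.sub_apply, Pi.neg_apply, Pi.add_apply]; ring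
  rw [this]
  exact hA _ (hA _ ha' _ hb) _ ha

lemma ncard_cosC (A : Set (V n)) (x : V n) : (cosC A x).ncard = A.ncard := by
  apply Set.ncard_image_of_injective
  intro u v h
  funext i
  have h2 := congrFun h i
  simp only [Pi.sub_apply, Pi.neg_apply] at h2
  linear_combination -h2

lemma cosB_eq_image' {A : Set (V n)} (hA : TC A) {a₀ : V n} (ha₀ : a₀ ∈ A) (x : V n) :
    cosB A x = (fun a => x + a - a₀) '' A := by
  ext y
  constructor
  · rintro ⟨a, ha, a', ha', rfl⟩
    refine ⟨-(-a - a₀) - a', hA _ (hA _ ha _ ha₀) _ ha', ?_⟩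
    funext i; simp only [Pi.sub_apply, Pi.neg_apply, Pi.add_apply]; ring
  · rintro ⟨a, ha, rfl⟩
    exact ⟨a, ha, a₀, ha₀, rfl⟩

lemma ncard_cosB {A : Set (V n)} (hA : TC A) (hAne : A.Nonempty) (x : V n) :
    (cosB A x).ncard = A.ncard := by
  obtain ⟨a₀, ha₀⟩ := hAne
  rw [cosB_eq_image' hA ha₀]
  apply Set.ncard_image_of_injective
  intro u v h
  funext i
  have h2 := congrFun h i
  simp only [Pi.add_apply, Pi.sub_apply] at h2
  linear_combination h2

/-- the invariant for the removed set during phase 1 -/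
def Inv (R : Set (V n)) : Prop :=
  R = ∅ ∨ (TC R ∧ ∃ d : ℕ, R.ncard = 3 ^ d) ∨
  (∃ A x d, TC A ∧ A.ncard = 3 ^ d ∧ A ⊆ R ∧ x ∈ R ∧ x ∉ A ∧
    R ⊆ tripleSpan A x ∧ R ≠ tripleSpan A x)

lemma inv_step {B : Set (V n)} (hB : TC B) {R : Set (V n)} (hRB : R ⊆ B) (hInv : Inv R)
    {X : V n} (hXB : X ∈ B) (hXR : X ∉ R)
    (hmax : ∀ Q ∈ B \ R, lineDeg (B \ R) Q ≤ lineDeg (B \ R) X) :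
    Inv (insert X R) := by
  rcases hInv with rfl | ⟨htc, d, hcard⟩ | ⟨A, x, d, hA, hcardA, hAR, hxR, hxA, hRspan, hRne⟩
  · -- R = ∅
    right; left
    constructor
    · rintro p hp q hq
      rcases hp with rfl | hp
      · rcases hq with rfl | hq
        · exact Set.mem_insert_iff.mpr (Or.inl (neg_neg_self _))
        · exact absurd hq (Set.notMem_empty _)
      · exact absurd hp (Set.notMem_empty _)
    · exact ⟨0, by simp⟩
  · -- R third-closed
    right; right
    have hRne : R.Nonempty := by
      rw [← Set.ncard_pos (Set.toFinite _), hcard]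
      positivity
    refine ⟨R, X, d, htc, hcard, Set.subset_insert _ _, Set.mem_insert _ _, hXR, ?_, ?_⟩
    · exact Set.insert_subset (mem_tripleSpan_self hRne X) (subset_tripleSpan R X)
    · intro hc
      have h1 : (insert X R).ncard = R.ncard + 1 :=
        Set.ncard_insert_of_notMem hXR (Set.toFinite _)
      have h2 := ncard_tripleSpan htc hRne hXR
      rw [← hc, h1, hcard] at h2
      have : (3:ℕ) ^ d ≥ 1 := Nat.one_le_pow _ _ (by norm_num)
      omega
  · -- between
    have hA'tc := tc_tripleSpan hA x
    have hAne : A.Nonempty := by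
      rw [← Set.ncard_pos (Set.toFinite _), hcardA]
      positivity
    -- R is not third-closed
    have hnotTC : ¬ (∀ p ∈ R, ∀ q ∈ R, -p - q ∈ R) := by
      intro hTC
      exact hRne (le_antisymm hRspan (tripleSpan_subset hTC hAR hxR))
    push_neg at hnotTC
    obtain ⟨q, hq, q', hq', hqq'⟩ := hnotTC
    have hX₀B : -q - q' ∈ B := hB _ (hRB hq) _ (hRB hq')
    have hg₀ : 1 ≤ gdeg R (-q - q') := gdeg_pos hq hq'
    have hle := hmax (-q - q') ⟨hX₀B, hqq'⟩
    have e1 := deg_formula (n := n) hB hRB hXB hXR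
    have e2 := deg_formula (n := n) hB hRB hX₀B hqq'
    have hgX : 1 ≤ gdeg R X := by omega
    have hXspan : X ∈ tripleSpan A x := by
      by_contra hc
      rw [gdeg_eq_zero hA'tc hRspan hc] at hgX
      omega
    by_cases hc : insert X R = tripleSpan A x
    · right; left
      refine ⟨?_, d + 1, ?_⟩
      · rw [hc]; exact hA'tc
      · rw [hc, ncard_tripleSpan hA hAne hxA, hcardA, pow_succ, Nat.mul_comm]
    · right; right
      exact ⟨A, x, d, hA, hcardA, hAR.trans (Set.subset_insert _ _),
        Set.mem_insert_of_mem _ hxR, hxA,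
        Set.insert_subset hXspan hRspan, hc⟩


def relSeq (S : Set (V n)) (P : ℕ → V n) : ℕ → Set (V n)
  | 0 => S
  | (i+1) => relSeq S P i \ {P i}

def GoodRun (S : Set (V n)) (k : ℕ) (P : ℕ → V n) : Prop :=
  ∀ i < k, P i ∈ relSeq S P i ∧ 0 < lineDeg (relSeq S P i) (P i) ∧
    ∀ Q ∈ relSeq S P i, lineDeg (relSeq S P i) Q ≤ lineDeg (relSeq S P i) (P i)

lemma relSeq_subset (S : Set (V n)) (P : ℕ → V n) : ∀ i, relSeq S P i ⊆ S
  | 0 => subset_rfl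
  | (i+1) => (Set.diff_subset).trans (relSeq_subset S P i)

lemma relSeq_indep (S : Set (V n)) (P P' : ℕ → V n) :
    ∀ i, (∀ j < i, P j = P' j) → relSeq S P i = relSeq S P' i := by
  intro i
  induction i with
  | zero => intro _; rfl
  | succ i ih =>
    intro h
    show relSeq S P i \ {P i} = relSeq S P' i \ {P' i}
    rw [ih (fun j hj => h j (Nat.lt_succ_of_lt hj)), h i (Nat.lt_succ_self i)]

lemma relSeq_shift (S : Set (V n)) (P : ℕ → V n) (j : ℕ) :
    ∀ i, relSeq S P (j + i) = relSeq (relSeq S P j) (fun t => P (j + t)) i := by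
  intro i
  induction i with
  | zero => rfl
  | succ i ih =>
    show relSeq S P (j + i) \ {P (j + i)} = _
    rw [ih]; rfl

lemma goodRun_shift {S : Set (V n)} {P : ℕ → V n} {k : ℕ} (h : GoodRun S k P) (j : ℕ) :
    GoodRun (relSeq S P j) (k - j) (fun t => P (j + t)) := by
  intro i hi
  have hj : j + i < k := by omega
  have := h (j + i) hj
  rwa [relSeq_shift S P j i] at this


def GoodPair (C₂ C₃ : Set (V n)) : Prop :=
  Disjoint C₂ C₃ ∧ TC C₂ ∧ TC C₃ ∧ ∀ p ∈ C₂, ∀ q ∈ C₃, -p - q ∉ C₂ ∪ C₃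


lemma goodPair_symm {C₂ C₃ : Set (V n)} (h : GoodPair C₂ C₃) : GoodPair C₃ C₂ := by
  obtain ⟨h1, h2, h3, h4⟩ := h
  refine ⟨h1.symm, h3, h2, fun p hp q hq hmem => ?_⟩
  rw [third_comm] at hmem
  rw [Set.union_comm] at hmem
  exact h4 q hq p hp hmem

lemma lineDeg_side {C₂ C₃ S : Set (V n)} (hgp : GoodPair C₂ C₃) (hS : S ⊆ C₂ ∪ C₃)
    {X : V n} (hX : X ∈ C₂) : lineDeg S X = lineDeg (S ∩ C₂) X := by
  obtain ⟨hdisj, htc2, htc3, hcross⟩ := hgp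
  unfold lineDeg
  congr 1
  ext L
  simp only [Set.mem_setOf_eq]
  constructor
  · rintro ⟨h1, h2, h3⟩
    refine ⟨h1, h2, fun y hy => ⟨h3 hy, ?_⟩⟩
    obtain ⟨Q, hQX, rfl⟩ := (isLine_through_iff L X).mp ⟨h1, h2⟩
    have hQC : Q ∈ C₂ := by
      rcases hS (h3 (by simp : Q ∈ ({X, Q, -X - Q} : Set (V n)))) with h | h
      · exact h
      · exfalso
        exact hcross X hX Q h (hS (h3 (by simp : -X - Q ∈ ({X, Q, -X - Q} : Set (V n)))))
    rcases hy with rfl | rfl | rfl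
    · exact hX
    · exact hQC
    · exact htc2 _ hX _ hQC
  · rintro ⟨h1, h2, h3⟩
    exact ⟨h1, h2, fun y hy => (h3 hy).1⟩

lemma isCapset_subset {C D : Set (V n)} (h : IsCapset C) (hDC : D ⊆ C) : IsCapset D :=
  fun L hL hsub => h L hL (hsub.trans hDC)

/-- pigeonhole: a large complement contains a line -/
lemma exists_line_avoiding {B R : Set (V n)} (hB : TC B) (hB2 : 1 < B.ncard)
    (h : 3 * R.ncard < B.ncard) : ∃ L, IsLine L ∧ L ⊆ B \ R := by
  obtain ⟨b₀, hb₀, b₁, hb₁, hne⟩ := (Set.one_lt_ncard (Set.toFinite _)).mp hB2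
  obtain ⟨v, hvdef⟩ : ∃ v : V n, v = b₁ - b₀ := ⟨_, rfl⟩
  have hvpt : ∀ i, v i = b₁ i - b₀ i := fun i => by rw [hvdef]; rfl
  have hv : v ≠ 0 := by
    intro hc; apply hne
    funext i
    have := congrFun hc i
    rw [hvpt i] at this
    simp only [Pi.zero_apply] at this
    linear_combination -this
  by_contra hcon
  push_neg at hcon
  have hBmem : ∀ b ∈ B, b + v ∈ B ∧ b - v ∈ B := by
    intro b hb
    constructor
    · have : b + v = -(-b - b₁) - b₀ := by
        funext i
        simp only [Pi.add_apply, Pi.sub_apply, Pi.neg_apply, hvpt i]; ring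
      rw [this]; exact hB _ (hB _ hb _ hb₁) _ hb₀
    · have : b - v = -(-b - b₀) - b₁ := by
        funext i
        simp only [Pi.add_apply, Pi.sub_apply, Pi.neg_apply, hvpt i]; ring
      rw [this]; exact hB _ (hB _ hb _ hb₀) _ hb₁
  have hcover : B ⊆ R ∪ (fun r => r - v) '' R ∪ (fun r => r + v) '' R := by
    intro b hb
    have hline : IsLine {b, b + v, b - v} := ⟨b, v, hv, (setOf_line b v).symm⟩
    have hsubB : ({b, b + v, b - v} : Set (V n)) ⊆ B := by
      rintro y (rfl | rfl | rfl)
      · exact hb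
      · exact (hBmem b hb).1
      · exact (hBmem b hb).2
    have hmeet : ¬ ({b, b + v, b - v} : Set (V n)) ⊆ B \ R := hcon _ hline
    have : ∃ y ∈ ({b, b + v, b - v} : Set (V n)), y ∈ R := by
      by_contra hno
      push_neg at hno
      exact hmeet (fun y hy => ⟨hsubB hy, hno y hy⟩)
    obtain ⟨y, hy, hyR⟩ := this
    rcases hy with rfl | rfl | rfl
    · exact Or.inl (Or.inl hyR)
    · refine Or.inl (Or.inr ⟨b + v, hyR, ?_⟩)
      show b + v - v = b
      funext i; simp only [Pi.add_apply, Pi.sub_apply]; ring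
    · refine Or.inr ⟨b - v, hyR, ?_⟩
      show b - v + v = b
      funext i; simp only [Pi.add_apply, Pi.sub_apply]; ring
  have hcard := Set.ncard_le_ncard hcover (Set.toFinite _)
  have h1 := Set.ncard_union_le (R ∪ (fun r => r - v) '' R) ((fun r => r + v) '' R)
  have h2 := Set.ncard_union_le R ((fun r => r - v) '' R)
  have h3 := Set.ncard_image_le (s := R) (f := fun r => r - v) (Set.toFinite _)
  have h4 := Set.ncard_image_le (s := R) (f := fun r => r + v) (Set.toFinite _)
  omega


lemma inter_left_of_union {S₂ S₃ C₂ C₃ : Set (V n)} (hd : Disjoint C₂ C₃)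
    (h2 : S₂ ⊆ C₂) (h3 : S₃ ⊆ C₃) : (S₂ ∪ S₃) ∩ C₂ = S₂ := by
  ext y
  constructor
  · rintro ⟨hy1 | hy1, hy2⟩
    · exact hy1
    · exact absurd (Set.disjoint_left.mp hd hy2) (fun hc => hc (h3 hy1))
  · intro hy
    exact ⟨Or.inl hy, h2 hy⟩

lemma interleave {C₂ C₃ : Set (V n)} (hgp : GoodPair C₂ C₃) :
    ∀ (k : ℕ) (S₂ S₃ : Set (V n)) (P : ℕ → V n), S₂ ⊆ C₂ → S₃ ⊆ C₃ →
    GoodRun (S₂ ∪ S₃) k P → IsCapset (relSeq (S₂ ∪ S₃) P k) →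
    ∃ k₂ P₂, GoodRun S₂ k₂ P₂ ∧ IsCapset (relSeq S₂ P₂ k₂) ∧
      relSeq S₂ P₂ k₂ = relSeq (S₂ ∪ S₃) P k ∩ C₂ := by
  intro k
  induction k with
  | zero =>
    intro S₂ S₃ P h2 h3 _ hcap
    exact ⟨0, P, fun i hi => absurd hi (Nat.not_lt_zero i),
      isCapset_subset hcap Set.subset_union_left,
      (inter_left_of_union hgp.1 h2 h3).symm⟩
  | succ k ih =>
    intro S₂ S₃ P h2 h3 hrun hcap
    have h0 := hrun 0 (Nat.succ_pos k)
    have hstate1 : relSeq (S₂ ∪ S₃) P 1 = (S₂ ∪ S₃) \ {P 0} := rfl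
    have hshift : relSeq (S₂ ∪ S₃) P (k + 1) =
        relSeq ((S₂ ∪ S₃) \ {P 0}) (fun t => P (1 + t)) k := by
      rw [Nat.add_comm k 1] at *
      rw [relSeq_shift (S₂ ∪ S₃) P 1 k, hstate1]
    have hrun' : GoodRun ((S₂ ∪ S₃) \ {P 0}) k (fun t => P (1 + t)) := by
      have := goodRun_shift hrun 1
      simpa [relSeq] using this
    rcases h0.1 with hP2 | hP3
    · -- P 0 ∈ S₂
      have hP0C : P 0 ∈ C₂ := h2 hP2
      have hsplit : (S₂ ∪ S₃) \ {P 0} = (S₂ \ {P 0}) ∪ S₃ := by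
        ext y
        simp only [Set.mem_diff, Set.mem_union, Set.mem_singleton_iff]
        constructor
        · rintro ⟨hy1 | hy1, hy2⟩
          · exact Or.inl ⟨hy1, hy2⟩
          · exact Or.inr hy1
        · rintro (⟨hy1, hy2⟩ | hy1)
          · exact ⟨Or.inl hy1, hy2⟩
          · refine ⟨Or.inr hy1, fun hc => ?_⟩
            subst hc
            exact Set.disjoint_left.mp hgp.1 hP0C (h3 hy1)
      rw [hsplit] at hshift hrun'
      obtain ⟨k₂', P₂', hgr, hcapF, hfin⟩ := ih (S₂ \ {P 0}) S₃ (fun t => P (1 + t))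
        (Set.diff_subset.trans h2) h3 hrun' (by rw [← hshift]; exact hcap)
      have hseq : ∀ i, relSeq S₂ (fun t => Nat.casesOn t (P 0) P₂') (i + 1) =
          relSeq (S₂ \ {P 0}) P₂' i := by
        intro i
        have e1 : relSeq S₂ (fun t => Nat.casesOn t (P 0) P₂') (1 + i) =
            relSeq (S₂ \ {P 0}) P₂' i := by
          rw [relSeq_shift]
          exact relSeq_indep _ _ _ i (fun j hj => by rw [Nat.add_comm])
        rwa [Nat.add_comm 1 i] at e1
      have hSS : S₂ ∪ S₃ ⊆ C₂ ∪ C₃ :=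
        Set.union_subset (h2.trans Set.subset_union_left) (h3.trans Set.subset_union_right)
      have hside : ∀ Q ∈ S₂, lineDeg S₂ Q = lineDeg (S₂ ∪ S₃) Q := by
        intro Q hQ
        rw [lineDeg_side hgp hSS (h2 hQ), inter_left_of_union hgp.1 h2 h3]
      refine ⟨k₂' + 1, fun t => Nat.casesOn t (P 0) P₂', ?_, ?_, ?_⟩
      · intro i hi
        cases i with
        | zero =>
          refine ⟨hP2, ?_, ?_⟩
          · show 0 < lineDeg S₂ (P 0)
            rw [hside (P 0) hP2]
            exact h0.2.1
          · intro Q hQ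
            show lineDeg S₂ Q ≤ lineDeg S₂ (P 0)
            rw [hside Q hQ, hside (P 0) hP2]
            exact h0.2.2 Q (Or.inl hQ)
        | succ i =>
          have hi' : i < k₂' := by omega
          have hh := hgr i hi'
          rw [← hseq i] at hh
          exact hh
      · rw [hseq k₂']
        exact hcapF
      · rw [hseq k₂', hfin, hshift]
    · -- P 0 ∈ S₃
      have hP0C : P 0 ∈ C₃ := h3 hP3
      have hsplit : (S₂ ∪ S₃) \ {P 0} = S₂ ∪ (S₃ \ {P 0}) := by
        ext y
        simp only [Set.mem_diff, Set.mem_union, Set.mem_singleton_iff]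
        constructor
        · rintro ⟨hy1 | hy1, hy2⟩
          · exact Or.inl hy1
          · exact Or.inr ⟨hy1, hy2⟩
        · rintro (hy1 | ⟨hy1, hy2⟩)
          · refine ⟨Or.inl hy1, fun hc => ?_⟩
            subst hc
            exact Set.disjoint_left.mp hgp.1 (h2 hy1) hP0C
          · exact ⟨Or.inr hy1, hy2⟩
      rw [hsplit] at hshift hrun'
      obtain ⟨k₂, P₂, hgr, hcapF, hfin⟩ := ih S₂ (S₃ \ {P 0}) (fun t => P (1 + t))
        h2 (Set.diff_subset.trans h3) hrun' (by rw [← hshift]; exact hcap)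
      exact ⟨k₂, P₂, hgr, hcapF, by rw [hfin, hshift]⟩


lemma lineDeg_pos_pair {S : Set (V n)} {X : V n} (h : 0 < lineDeg S X) :
    ∃ a ∈ S, ∃ b ∈ S, a ≠ b := by
  rw [lineDeg, Set.ncard_pos (Set.toFinite _)] at h
  obtain ⟨L, hL1, hL2, hL3⟩ := h
  obtain ⟨Q, hQX, rfl⟩ := (isLine_through_iff L X).mp ⟨hL1, hL2⟩
  exact ⟨X, hL3 (by simp), Q, hL3 (by simp), fun hc => hQX hc.symm⟩

lemma removed_succ {B : Set (V n)} {P : ℕ → V n} {i : ℕ}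
    (hPi : P i ∈ relSeq B P i) :
    B \ relSeq B P (i + 1) = insert (P i) (B \ relSeq B P i) := by
  have hPB : P i ∈ B := relSeq_subset B P i hPi
  ext y
  simp only [relSeq, Set.mem_diff, Set.mem_insert_iff, Set.mem_singleton_iff]
  constructor
  · rintro ⟨hyB, hy⟩
    by_cases hc : y = P i
    · exact Or.inl hc
    · refine Or.inr ⟨hyB, fun hyS => hy ⟨hyS, hc⟩⟩
  · rintro (rfl | ⟨hyB, hy⟩)
    · exact ⟨hPB, fun hc => hc.2 rfl⟩
    · exact ⟨hyB, fun hc => hy hc.1⟩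

lemma ncard_removed {B : Set (V n)} {P : ℕ → V n} {k : ℕ} (hrun : GoodRun B k P) :
    ∀ i ≤ k, (B \ relSeq B P i).ncard = i := by
  intro i
  induction i with
  | zero => intro _; simp [relSeq]
  | succ i ih =>
    intro hik
    have h1 := (hrun i (by omega)).1
    rw [removed_succ h1, Set.ncard_insert_of_notMem (fun hc => hc.2 h1) (Set.toFinite _),
      ih (by omega)]

lemma state_eq_diff {B : Set (V n)} {P : ℕ → V n} (i : ℕ) :
    B \ (B \ relSeq B P i) = relSeq B P i :=
  Set.diff_diff_cancel_left (relSeq_subset B P i)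

theorem main (m : ℕ) : ∀ (B : Set (V n)) (k : ℕ) (P : ℕ → V n),
    TC B → B.ncard = 3 ^ m → GoodRun B k P → IsCapset (relSeq B P k) →
    (relSeq B P k).ncard = 2 ^ m := by
  induction m with
  | zero =>
    intro B k P hB hcard hrun hcap
    have hk : k = 0 := by
      by_contra hc
      have h0 := hrun 0 (Nat.pos_of_ne_zero hc)
      obtain ⟨a, ha, b, hb, hab⟩ := lineDeg_pos_pair h0.2.1
      have : 1 < B.ncard := (Set.one_lt_ncard (Set.toFinite _)).mpr ⟨a, ha, b, hb, hab⟩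
      omega
    subst hk
    simpa [relSeq] using hcard
  | succ m ih =>
    intro B k P hB hcard hrun hcap
    have h3m : (1:ℕ) ≤ 3 ^ m := Nat.one_le_pow _ _ (by norm_num)
    have hpow : (3:ℕ) ^ (m + 1) = 3 * 3 ^ m := by ring
    have hB2 : 1 < B.ncard := by rw [hcard]; omega
    -- the run is at least 3^m steps long
    have hklb : 3 ^ m ≤ k := by
      by_contra hc
      push_neg at hc
      have hR := ncard_removed hrun k (le_refl k)
      have hline := exists_line_avoiding hB hB2 (R := B \ relSeq B P k)
        (by rw [hR, hcard]; omega)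
      obtain ⟨L, hL1, hL2⟩ := hline
      rw [state_eq_diff] at hL2
      exact hcap L hL1 hL2
    -- invariant up to step 3^m
    have hinv : ∀ i ≤ 3 ^ m, Inv (B \ relSeq B P i) := by
      intro i
      induction i with
      | zero => intro _; left; simp [relSeq]
      | succ i ih2 =>
        intro hik
        have hi : i < k := by omega
        have h0 := hrun i hi
        rw [removed_succ h0.1]
        have hPB : P i ∈ B := relSeq_subset B P i h0.1
        refine inv_step hB Set.diff_subset (ih2 (by omega)) hPB (fun hc => hc.2 h0.1) ?_
        rw [state_eq_diff]
        exact h0.2.2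
    -- at step 3^m the removed set is an affine hyperplane of B
    obtain ⟨j, hjdef⟩ : ∃ j, j = 3 ^ m := ⟨_, rfl⟩
    have hklb' : j ≤ k := by omega
    obtain ⟨A, hAdef⟩ : ∃ A, A = B \ relSeq B P j := ⟨_, rfl⟩
    have hAcard : A.ncard = 3 ^ m := by rw [hAdef, ← hjdef]; exact ncard_removed hrun j hklb'
    have hAB : A ⊆ B := hAdef ▸ Set.diff_subset
    have hinvA : Inv A := by rw [hAdef]; exact hjdef ▸ hinv j (le_of_eq hjdef)
    have hAtc : TC A := by
      rcases hinvA with hc | ⟨htc, _⟩ | ⟨A', x, d, hA', hcardA', hsub, hx, hxA', hspan, hne⟩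
      · rw [hc] at hAcard; simp at hAcard
        have := h3m
        omega
      · exact htc
      · exfalso
        have hd1 : 3 ^ d < A.ncard := by
          have : insert x A' ⊆ A := Set.insert_subset hx hsub
          have h2 := Set.ncard_le_ncard this (Set.toFinite _)
          rw [Set.ncard_insert_of_notMem hxA' (Set.toFinite _), hcardA'] at h2
          omega
        have hA'ne : A'.Nonempty := by
          rw [← Set.ncard_pos (Set.toFinite _), hcardA']; positivity
        have hd2 : A.ncard < 3 ^ (d + 1) := by
          have hss : A ⊂ tripleSpan A' x := Set.ssubset_iff_subset_ne.mpr ⟨hspan, hne⟩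
          have := Set.ncard_lt_ncard hss (Set.toFinite _)
          rw [ncard_tripleSpan hA' hA'ne hxA'] at this
          have h3 : (3:ℕ)^(d+1) = 3 * 3^d := by ring
          omega
        rw [hAcard] at hd1 hd2
        have hlt1 : d < m := (Nat.pow_lt_pow_iff_right (by norm_num : 1 < 3)).mp hd1
        have hlt2 : m < d + 1 := (Nat.pow_lt_pow_iff_right (by norm_num : 1 < 3)).mp hd2
        omega
    have hAne : A.Nonempty := by
      rw [← Set.ncard_pos (Set.toFinite _), hAcard]; positivity
    -- pick x outside A, get the two cosets
    have hBAne : (B \ A).Nonempty := by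
      rw [← Set.ncard_pos (Set.toFinite _), Set.ncard_diff hAB (Set.toFinite _), hcard, hAcard]
      have : (3:ℕ)^(m+1) = 3 * 3^m := by ring
      omega
    obtain ⟨x, hxB, hxA⟩ := hBAne
    have hspanB : tripleSpan A x = B := by
      apply Set.eq_of_subset_of_ncard_le (tripleSpan_subset hB hAB hxB)
      rw [ncard_tripleSpan hAtc hAne hxA, hcard, hAcard]
      have : (3:ℕ)^(m+1) = 3 * 3^m := by ring
      omega
    obtain ⟨hd1, hd2, hd3⟩ := disj_ABC hAtc hxA
    have hC2C3 : B \ A = cosB A x ∪ cosC A x := by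
      rw [← hspanB]
      ext y
      simp only [tripleSpan, Set.mem_diff, Set.mem_union]
      constructor
      · rintro ⟨(h | h) | h, hyA⟩
        · exact absurd h hyA
        · exact Or.inl h
        · exact Or.inr h
      · rintro (h | h)
        · refine ⟨Or.inl (Or.inr h), fun hc => ?_⟩
          exact Set.eq_empty_iff_forall_notMem.mp hd1 y ⟨hc, h⟩
        · refine ⟨Or.inr h, fun hc => ?_⟩
          exact Set.eq_empty_iff_forall_notMem.mp hd2 y ⟨hc, h⟩
    have hgp : GoodPair (cosB A x) (cosC A x) := by
      refine ⟨Set.disjoint_iff_inter_eq_empty.mpr hd3, tc_cosB hAtc x, tc_cosC hAtc x, ?_⟩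
      intro p hp q hq hmem
      have hPA := cross_third_mem_A hAtc x p hp q hq
      rcases hmem with h | h
      · exact Set.eq_empty_iff_forall_notMem.mp hd1 _ ⟨hPA, h⟩
      · exact Set.eq_empty_iff_forall_notMem.mp hd2 _ ⟨hPA, h⟩
    -- split the remaining run
    have hstatej : relSeq B P j = cosB A x ∪ cosC A x := by
      rw [← hC2C3, hAdef, state_eq_diff]
    have hrun' : GoodRun (cosB A x ∪ cosC A x) (k - j) (fun t => P (j + t)) := by
      have := goodRun_shift hrun j
      rwa [hstatej] at this
    have hfinal : relSeq (cosB A x ∪ cosC A x) (fun t => P (j + t)) (k - j) = relSeq B P k := by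
      have hk2 : k = j + (k - j) := by omega
      rw [← hstatej, ← relSeq_shift, ← hk2]
    have hcap' : IsCapset (relSeq (cosB A x ∪ cosC A x) (fun t => P (j + t)) (k - j)) := by
      rw [hfinal]; exact hcap
    obtain ⟨k₂, P₂, hgr₂, hcap₂, hfin₂⟩ := interleave hgp (k - j) (cosB A x) (cosC A x)
      (fun t => P (j + t)) subset_rfl subset_rfl hrun' hcap'
    obtain ⟨k₃, P₃, hgr₃, hcap₃, hfin₃⟩ := interleave (goodPair_symm hgp) (k - j)
      (cosC A x) (cosB A x) (fun t => P (j + t)) subset_rfl subset_rfl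
      (by rwa [Set.union_comm]) (by rwa [Set.union_comm])
    rw [hfinal] at hfin₂
    rw [Set.union_comm (cosC A x) (cosB A x), hfinal] at hfin₃
    have hcardB2 : (cosB A x).ncard = 3 ^ m := by rw [ncard_cosB hAtc hAne x, hAcard]
    have hcardC2 : (cosC A x).ncard = 3 ^ m := by rw [ncard_cosC A x, hAcard]
    have hn₂ := ih (cosB A x) k₂ P₂ (tc_cosB hAtc x) hcardB2 hgr₂ hcap₂
    have hn₃ := ih (cosC A x) k₃ P₃ (tc_cosC hAtc x) hcardC2 hgr₃ hcap₃
    rw [hfin₂] at hn₂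
    rw [hfin₃] at hn₃
    -- final count
    have hsubj : relSeq B P k ⊆ cosB A x ∪ cosC A x := by
      rw [← hfinal]
      exact relSeq_subset _ _ _
    have hsplit : relSeq B P k = (relSeq B P k ∩ cosB A x) ∪ (relSeq B P k ∩ cosC A x) := by
      rw [← Set.inter_union_distrib_left]
      exact (Set.inter_eq_self_of_subset_left hsubj).symm
    have hdisj : Disjoint (relSeq B P k ∩ cosB A x) (relSeq B P k ∩ cosC A x) :=
      Set.disjoint_of_subset Set.inter_subset_right Set.inter_subset_right
        (Set.disjoint_iff_inter_eq_empty.mpr hd3)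
    rw [hsplit, Set.ncard_union_eq hdisj (Set.toFinite _) (Set.toFinite _), hn₂, hn₃]
    ring

lemma greedySeq_eq_relSeq (P : ℕ → V n) : ∀ k, greedySeq P k = relSeq Set.univ P k
  | 0 => rfl
  | (k+1) => by
    show greedySeq P k \ {P k} = relSeq Set.univ P k \ {P k}
    rw [greedySeq_eq_relSeq P k]

lemma tc_univ : TC (Set.univ : Set (V n)) := fun _ _ _ _ => trivial

lemma ncard_univ_eq : (Set.univ : Set (V n)).ncard = 3 ^ n := by
  rw [Set.ncard_univ, Nat.card_eq_fintype_card]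
  simp [ZMod.card]

end Aux

/-- Every greedy capset in `𝔽₃ⁿ` (`n ≥ 1`) has cardinality `2ⁿ`. -/
theorem greedy_capsets_stmt5 {n : ℕ} (hn : 1 ≤ n) (C : Set (Fin n → ZMod 3))
    (hC : IsGreedyCapset C) : C.ncard = 2 ^ n := by
  obtain ⟨k, P, hrun, hCeq, hcap⟩ := hC
  have hrun' : Aux.GoodRun Set.univ k P := by
    intro i hi
    have := hrun i hi
    rwa [Aux.greedySeq_eq_relSeq P i] at this
  have hcap' : IsCapset (Aux.relSeq Set.univ P k) := by
    rwa [← Aux.greedySeq_eq_relSeq P k, ← hCeq]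
  have := Aux.main n Set.univ k P Aux.tc_univ Aux.ncard_univ_eq hrun' hcap'
  rwa [← Aux.greedySeq_eq_relSeq P k, ← hCeq] at this
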